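/- In the concrete Weyl representation on ℓ²(S), let Ω ∈ ℓ²(S) be the indicator sequence of 0 (Ω_φ = δ_{φ,0}). If φ ≠ φ' in S, then W(φ)Ω and W(φ')Ω are orthogonal unit vectors, and consequently the operator norm ‖W(φ) − W(φ')‖ = 2. -/

import Mathlib

open scoped ENNReal

namespace WeylAux2

lemma abs_phase (r : ℝ) : ‖Complex.exp (-(Complex.I * r) / 2)‖ = 1 := by
  rw [Complex.norm_exp]
  have : (-(Complex.I * r) / 2).re = 0 := by simp
  rw [this, Real.exp_zero]

lemma norm_sq_eq_sum {S : Type*} (y : lp (fun _ : S => ℂ) 2) (s : Finset S)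
    (h : ∀ ψ ∉ s, (y : ∀ _ : S, ℂ) ψ = 0) :
    ‖y‖ ^ 2 = ∑ ψ ∈ s, ‖(y : ∀ _ : S, ℂ) ψ‖ ^ 2 := by
  have hp : 0 < (2 : ℝ≥0∞).toReal := by norm_num
  have H := lp.hasSum_norm hp y
  have h2 : (2 : ℝ≥0∞).toReal = ((2 : ℕ) : ℝ) := by norm_num
  rw [h2] at H
  simp only [Real.rpow_natCast] at H
  have H2 : HasSum (fun ψ => ‖(y : ∀ _ : S, ℂ) ψ‖ ^ (2:ℕ))
      (∑ ψ ∈ s, ‖(y : ∀ _ : S, ℂ) ψ‖ ^ (2:ℕ)) := by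
    apply hasSum_sum_of_ne_finset_zero
    intro ψ hψ
    rw [h ψ hψ]
    simp
  have := H.unique H2
  simpa using this

noncomputable def cseq (u : ℕ → ℂ) : ℕ → ℂ
  | 0 => 1
  | (k+1) => -(u (k+1)) * cseq u k

lemma cseq_succ (u : ℕ → ℂ) (k : ℕ) : cseq u (k+1) = -(u (k+1)) * cseq u k := rfl

lemma cseq_abs (u : ℕ → ℂ) (hu : ∀ k, ‖u k‖ = 1) : ∀ k, ‖cseq u k‖ = 1 := by
  intro k
  induction k with
  | zero => simp [cseq]
  | succ n ih => simp [cseq, hu, ih]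

lemma isometry_aux {S : Type*} [AddCommGroup S]
    (e : S → ℂ) (he : ∀ ψ, ‖e ψ‖ = 1) (φ : S)
    (b a : lp (fun _ : S => ℂ) 2)
    (hb : ∀ ψ, (b : ∀ _ : S, ℂ) ψ = e ψ * (a : ∀ _ : S, ℂ) (ψ + φ)) :
    ‖b‖ = ‖a‖ := by
  have hp : 0 < (2 : ℝ≥0∞).toReal := by norm_num
  have H1 := lp.norm_rpow_eq_tsum hp b
  have H2 := lp.norm_rpow_eq_tsum hp a
  have key : ∑' ψ, ‖(b : ∀ _ : S, ℂ) ψ‖ ^ (2:ℝ≥0∞).toReal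
      = ∑' ψ, ‖(a : ∀ _ : S, ℂ) ψ‖ ^ (2:ℝ≥0∞).toReal := by
    have h1 : ∀ ψ, ‖(b : ∀ _ : S, ℂ) ψ‖ ^ (2:ℝ≥0∞).toReal
        = ‖(a : ∀ _ : S, ℂ) (ψ + φ)‖ ^ (2:ℝ≥0∞).toReal := by
      intro ψ
      rw [hb ψ, norm_mul, he ψ, one_mul]
    simp only [h1]
    exact Equiv.tsum_eq (Equiv.addRight φ) (fun ψ => ‖(a : ∀ _ : S, ℂ) ψ‖ ^ (2:ℝ≥0∞).toReal)
  have : ‖b‖ ^ (2:ℝ≥0∞).toReal = ‖a‖ ^ (2:ℝ≥0∞).toReal := by rw [H1, H2, key]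
  have h2 : (2:ℝ≥0∞).toReal = 2 := by norm_num
  rw [h2] at this
  have h3 : ‖b‖ ^ (2:ℕ) = ‖a‖ ^ (2:ℕ) := by
    rw [← Real.rpow_natCast ‖b‖ 2, ← Real.rpow_natCast ‖a‖ 2]
    exact_mod_cast this
  have hb0 := norm_nonneg b
  have ha0 := norm_nonneg a
  calc ‖b‖ = Real.sqrt (‖b‖ ^ 2) := (Real.sqrt_sq hb0).symm
    _ = Real.sqrt (‖a‖ ^ 2) := by rw [h3]
    _ = ‖a‖ := Real.sqrt_sq ha0

end WeylAux2

/-- In the concrete Weyl representation on ℓ²(S), with Ω the indicator sequence of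
0 ∈ S: for φ ≠ φ', W(φ)Ω and W(φ')Ω are orthogonal unit vectors and
‖W(φ) − W(φ')‖ = 2. -/
theorem weyl_generators_distance_two {S : Type*} [AddCommGroup S] [Module ℝ S]
    [DecidableEq S]
    (σ : S →ₗ[ℝ] S →ₗ[ℝ] ℝ)
    (hσ_alt : ∀ φ : S, σ φ φ = 0)
    (hσ_anti : ∀ φ φ' : S, σ φ φ' = -σ φ' φ)
    (W : S → (lp (fun _ : S => ℂ) 2 →L[ℂ] lp (fun _ : S => ℂ) 2))
    (hW : ∀ (φ' : S) (a : lp (fun _ : S => ℂ) 2) (φ : S),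
      (W φ' a : ∀ _ : S, ℂ) φ =
        Complex.exp (-(Complex.I * (σ φ' φ)) / 2) * (a : ∀ _ : S, ℂ) (φ + φ'))
    (Ω : lp (fun _ : S => ℂ) 2)
    (hΩ : ∀ φ : S, (Ω : ∀ _ : S, ℂ) φ = if φ = 0 then 1 else 0) :
    ∀ φ φ' : S, φ ≠ φ' →
      (inner ℂ (W φ Ω) (W φ' Ω) : ℂ) = 0 ∧
      ‖W φ Ω‖ = 1 ∧ ‖W φ' Ω‖ = 1 ∧
      ‖W φ - W φ'‖ = 2 := by
  classical
  have hiso : ∀ (χ : S) (a : lp (fun _ : S => ℂ) 2), ‖W χ a‖ = ‖a‖ := by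
    intro χ a
    exact WeylAux2.isometry_aux (fun ψ => Complex.exp (-(Complex.I * (σ χ ψ)) / 2))
      (fun ψ => WeylAux2.abs_phase _) χ (W χ a) a (fun ψ => hW χ a ψ)
  have hkey : ∀ χ : S, W χ Ω = lp.single 2 (-χ) 1 := by
    intro χ
    apply lp.ext
    funext ψ
    rw [hW]
    by_cases hψ : ψ = -χ
    · subst hψ
      have hσ0 : σ χ (-χ) = 0 := by rw [map_neg, hσ_alt, neg_zero]
      have h1 : (-χ) + χ = 0 := neg_add_cancel χ
      rw [hΩ, h1, hσ0]
      simp [lp.single_apply_self]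
    · have h2 : ψ + χ ≠ 0 := fun h => hψ (eq_neg_of_add_eq_zero_left h)
      rw [hΩ, if_neg h2, mul_zero, lp.single_apply_ne 2 _ _ hψ]
  intro φ φ' hne
  have hneg : (-φ : S) ≠ -φ' := fun h => hne (neg_injective h)
  refine ⟨?_, ?_, ?_, ?_⟩
  · rw [hkey φ, hkey φ', lp.inner_single_left]
    rw [lp.single_apply_ne 2 _ _ hneg]
    simp
  · rw [hkey φ]
    simpa using lp.norm_single (p := 2) (by norm_num) (fun _ : S => (1:ℂ)) (-φ)
  · rw [hkey φ']
    simpa using lp.norm_single (p := 2) (by norm_num) (fun _ : S => (1:ℂ)) (-φ')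
  · -- the operator norm
    have hle : ‖W φ - W φ'‖ ≤ 2 := by
      apply ContinuousLinearMap.opNorm_le_bound _ (by norm_num)
      intro a
      rw [ContinuousLinearMap.sub_apply]
      calc ‖W φ a - W φ' a‖ ≤ ‖W φ a‖ + ‖W φ' a‖ := norm_sub_le _ _
        _ = 2 * ‖a‖ := by rw [hiso, hiso]; ring
    set δ : S := φ' - φ with hδdef
    have hδ : δ ≠ 0 := sub_ne_zero.mpr hne.symm
    have hinj : ∀ m n : ℕ, m • δ = n • δ → m = n := by
      intro m n h
      have h' : ((m:ℝ) - (n:ℝ)) • δ = 0 := by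
        rw [sub_smul, Nat.cast_smul_eq_nsmul, Nat.cast_smul_eq_nsmul, h, sub_self]
      rcases smul_eq_zero.mp h' with h0 | h0
      · exact_mod_cast sub_eq_zero.mp h0
      · exact absurd h0 hδ
    set e1 : S → ℂ := fun ψ => Complex.exp (-(Complex.I * (σ φ ψ)) / 2) with he1def
    set e2 : S → ℂ := fun ψ => Complex.exp (-(Complex.I * (σ φ' ψ)) / 2) with he2def
    set P : ℕ → S := fun k => k • δ - φ with hPdef
    set u : ℕ → ℂ := fun k => e1 (P k) * (e2 (P k))⁻¹ with hudef
    set c : ℕ → ℂ := WeylAux2.cseq u with hcdef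
    have he1 : ∀ ψ, ‖e1 ψ‖ = 1 := fun ψ => WeylAux2.abs_phase _
    have he2 : ∀ ψ, ‖e2 ψ‖ = 1 := fun ψ => WeylAux2.abs_phase _
    have he2ne : ∀ ψ, e2 ψ ≠ 0 := fun ψ => Complex.exp_ne_zero _
    have hu : ∀ k, ‖u k‖ = 1 := by
      intro k
      rw [hudef]
      simp only [norm_mul, norm_inv, he1, he2]
      norm_num
    have hc : ∀ k, ‖c k‖ = 1 := WeylAux2.cseq_abs u hu
    have hrec : ∀ k : ℕ, e2 (P (k+1)) * c (k+1) = -(e1 (P (k+1)) * c k) := by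
      intro k
      have hne2 : e2 (P (k+1)) ≠ 0 := he2ne _
      rw [hcdef, WeylAux2.cseq_succ, hudef]
      field_simp
    have hPφ : ∀ k : ℕ, P k + φ = k • δ := by
      intro k
      show k • δ - φ + φ = k • δ
      exact sub_add_cancel _ _
    have hPφ' : ∀ k : ℕ, P k + φ' = (k+1) • δ := by
      intro k
      show k • δ - φ + φ' = (k+1) • δ
      rw [succ_nsmul, hδdef]
      generalize k • (φ' - φ) = A
      abel
    -- the per-N estimate
    have hN : ∀ N : ℕ, 1 ≤ N → 4 * (N:ℝ) - 2 ≤ ‖W φ - W φ'‖ ^ 2 * N := by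
      intro N hN1
      set x : lp (fun _ : S => ℂ) 2 :=
        ∑ m ∈ Finset.range N, lp.single 2 ((m+1) • δ) (c m) with hxdef
      have hxcoe : ∀ ψ, (x : ∀ _ : S, ℂ) ψ
          = ∑ m ∈ Finset.range N, (lp.single 2 ((m+1) • δ) (c m) : ∀ _ : S, ℂ) ψ := by
        intro ψ
        rw [hxdef, lp.coeFn_sum, Finset.sum_apply]
      have hx0 : ∀ ψ, (∀ m, m < N → ψ ≠ (m+1) • δ) → (x : ∀ _ : S, ℂ) ψ = 0 := by
        intro ψ h
        rw [hxcoe]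
        apply Finset.sum_eq_zero
        intro m hm
        exact lp.single_apply_ne 2 _ _ (h m (Finset.mem_range.mp hm))
      have hxval : ∀ m, m < N → (x : ∀ _ : S, ℂ) ((m+1) • δ) = c m := by
        intro m hm
        rw [hxcoe, Finset.sum_eq_single m]
        · exact lp.single_apply_self 2 _ _
        · intro n hn hnm
          apply lp.single_apply_ne 2
          intro h
          exact hnm.symm (by have := hinj _ _ h; omega)
        · intro h
          exact absurd (Finset.mem_range.mpr hm) h
      have hxs : ‖x‖ ^ 2 = (N:ℝ) := by
        rw [WeylAux2.norm_sq_eq_sum x ((Finset.range N).image (fun m => (m+1) • δ))]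
        · rw [Finset.sum_image (by intro a ha b hb h; have := hinj _ _ h; omega)]
          have : ∀ m ∈ Finset.range N, ‖(x : ∀ _ : S, ℂ) ((m+1) • δ)‖ ^ 2 = (1:ℝ) := by
            intro m hm
            rw [hxval m (Finset.mem_range.mp hm), hc]
            norm_num
          rw [Finset.sum_congr rfl this]
          simp
        · intro ψ hψ
          apply hx0
          intro m hm h
          exact hψ (Finset.mem_image.mpr ⟨m, Finset.mem_range.mpr hm, h.symm⟩)
      set y : lp (fun _ : S => ℂ) 2 := (W φ - W φ') x with hydef
      have hy : ∀ ψ, (y : ∀ _ : S, ℂ) ψ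
          = e1 ψ * (x : ∀ _ : S, ℂ) (ψ + φ) - e2 ψ * (x : ∀ _ : S, ℂ) (ψ + φ') := by
        intro ψ
        rw [hydef, ContinuousLinearMap.sub_apply, lp.coeFn_sub, Pi.sub_apply, hW, hW]
      -- values at the points P k
      have hy0 : (y : ∀ _ : S, ℂ) (P 0) = -(e2 (P 0) * c 0) := by
        rw [hy, hPφ, hPφ']
        have h1 : (x : ∀ _ : S, ℂ) ((0:ℕ) • δ) = 0 := by
          apply hx0
          intro m hm h
          have := hinj _ _ h
          omega
        have h2 : (x : ∀ _ : S, ℂ) ((0+1) • δ) = c 0 := hxval 0 hN1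
        rw [h1, h2]
        ring
      have hymid : ∀ j : ℕ, j + 1 < N →
          (y : ∀ _ : S, ℂ) (P (j+1)) = 2 * (e1 (P (j+1)) * c j) := by
        intro j hj
        rw [hy, hPφ, hPφ']
        rw [hxval j (by omega), hxval (j+1) (by omega)]
        have := hrec j
        rw [this]
        ring
      have hyN : (y : ∀ _ : S, ℂ) (P N) = e1 (P N) * c (N-1) := by
        rw [hy, hPφ, hPφ']
        have h1 : (x : ∀ _ : S, ℂ) ((N:ℕ) • δ) = c (N-1) := by
          have : N = (N - 1) + 1 := by omega
          rw [this]
          exact hxval (N-1) (by omega)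
        have h2 : (x : ∀ _ : S, ℂ) ((N+1) • δ) = 0 := by
          apply hx0
          intro m hm h
          have := hinj _ _ h
          omega
        rw [h1, h2]
        ring
      have hsupp : ∀ ψ ∉ (Finset.range (N+1)).image P, (y : ∀ _ : S, ℂ) ψ = 0 := by
        intro ψ hψ
        rw [hy]
        have h1 : (x : ∀ _ : S, ℂ) (ψ + φ) = 0 := by
          apply hx0
          intro m hm h
          apply hψ
          refine Finset.mem_image.mpr ⟨m+1, Finset.mem_range.mpr (by omega), ?_⟩
          show (m+1) • δ - φ = ψ
          rw [← h]
          exact add_sub_cancel_right ψ φ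
        have h2 : (x : ∀ _ : S, ℂ) (ψ + φ') = 0 := by
          apply hx0
          intro m hm h
          apply hψ
          refine Finset.mem_image.mpr ⟨m, Finset.mem_range.mpr (by omega), ?_⟩
          show m • δ - φ = ψ
          have hψeq : ψ = (m+1) • δ - φ' := eq_sub_of_add_eq h
          rw [hψeq, succ_nsmul, hδdef]
          generalize m • (φ' - φ) = A
          abel
        rw [h1, h2]
        ring
      have hPinj : ∀ a ∈ Finset.range (N+1), ∀ b ∈ Finset.range (N+1), P a = P b → a = b := by
        intro a _ b _ h
        have h' : a • δ - φ = b • δ - φ := h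
        have h'' : a • δ = b • δ := by
          have := congrArg (fun z => z + φ) h'
          simpa [sub_add_cancel] using this
        exact hinj a b h''
      have hys : ‖y‖ ^ 2 = 4 * (N:ℝ) - 2 := by
        rw [WeylAux2.norm_sq_eq_sum y ((Finset.range (N+1)).image P) hsupp,
          Finset.sum_image hPinj]
        have hval : ∀ k ∈ Finset.range (N+1), ‖(y : ∀ _ : S, ℂ) (P k)‖ ^ 2
            = 4 - (if k = 0 then (3:ℝ) else 0) - (if k = N then (3:ℝ) else 0) := by
          intro k hk
          have hkN : k ≤ N := by
            have := Finset.mem_range.mp hk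
            omega
          rcases Nat.eq_zero_or_pos k with rfl | hkpos
          · rw [hy0]
            have hN0 : (0:ℕ) ≠ N := by omega
            rw [if_pos rfl, if_neg hN0]
            simp only [norm_neg, norm_mul, he2, hc, one_mul]
            norm_num
          · rcases eq_or_lt_of_le hkN with rfl | hklt
            · rw [hyN]
              rw [if_neg (by omega), if_pos rfl]
              simp only [norm_mul, he1, hc, one_mul]
              norm_num
            · obtain ⟨j, rfl⟩ : ∃ j, k = j + 1 := ⟨k - 1, by omega⟩
              rw [hymid j (by omega)]
              rw [if_neg (by omega), if_neg (by omega)]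
              simp only [norm_mul, he1, hc, one_mul, Complex.norm_ofNat]
              norm_num
        rw [Finset.sum_congr rfl hval]
        rw [Finset.sum_sub_distrib, Finset.sum_sub_distrib, Finset.sum_const,
          Finset.card_range, Finset.sum_ite_eq' (Finset.range (N+1)) 0 (fun _ => (3:ℝ)),
          Finset.sum_ite_eq' (Finset.range (N+1)) N (fun _ => (3:ℝ)),
          if_pos (Finset.mem_range.mpr (by omega)),
          if_pos (Finset.mem_range.mpr (by omega))]
        push_cast
        ring
      have hle2 : ‖y‖ ≤ ‖W φ - W φ'‖ * ‖x‖ := by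
        rw [hydef]
        exact ContinuousLinearMap.le_opNorm _ x
      have hsq : ‖y‖ ^ 2 ≤ (‖W φ - W φ'‖ * ‖x‖) ^ 2 :=
        pow_le_pow_left₀ (norm_nonneg y) hle2 2
      rw [mul_pow, hys, hxs] at hsq
      exact hsq
    have hlim : Filter.Tendsto (fun N : ℕ => 4 - 2 / (N:ℝ)) Filter.atTop (nhds 4) := by
      have h0 := tendsto_const_div_atTop_nhds_zero_nat (2:ℝ)
      simpa using Filter.Tendsto.sub (tendsto_const_nhds (x := (4:ℝ))) h0
    have h4 : (4:ℝ) ≤ ‖W φ - W φ'‖ ^ 2 := by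
      refine le_of_tendsto hlim ?_
      filter_upwards [Filter.eventually_ge_atTop 1] with N hN1
      have hb := hN N hN1
      have hNpos : (0:ℝ) < N := by exact_mod_cast hN1
      have heq : (4 - 2 / (N:ℝ)) * N = 4 * (N:ℝ) - 2 := by
        field_simp
      exact (mul_le_mul_iff_left₀ hNpos).mp (by rw [heq]; exact hb)
    have hge : 2 ≤ ‖W φ - W φ'‖ := by
      nlinarith [norm_nonneg (W φ - W φ')]
    exact le_antisymm hle hge
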